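/- Let t > 0, let λ : [0, t] → [0, ∞) be integrable with Λ(t) = ∫_0^t λ(a) da > 0, let r : [0, t] → ℝ be integrable, and let R > 0. Let N be a Poisson random variable with mean Λ(t), and let (A_i, ξ_i, τ_i)_{i ≥ 1} be i.i.d. triples, independent of N, with mutually independent components: A_i has density a ↦ λ(a)/Λ(t) on [0, t], ξ_i is nonnegative and integrable with continuous cumulative distribution function F_ξ, and τ_i ≥ 0 has continuous cumulative distribution function F_τ. Define the discounted payoff X(t) = e^{−∫_0^t r(s) ds} · max_{1 ≤ i ≤ N} ξ_i · 1{ξ_i ≥ R} · 1{τ_i ≥ t − A_i} (with the maximum equal to 0 if N = 0). Then E[X(t)] = e^{−∫_0^t r(s) ds} ∫_0^∞ ( 1 − e^{−Λ(t) ψ(t, y)} ) dy, where ψ(t, y) = ( 1 − F_ξ( max(R, y) ) ) ( 1 − (1/Λ(t)) ∫_0^t λ(a) F_τ(t − a) da ). -/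

import Mathlib

open MeasureTheory ProbabilityTheory

set_option linter.unusedVariables false
set_option linter.unusedSectionVars false
set_option linter.unnecessarySimpa false


section Aux
variable {Ω : Type*} [MeasureSpace Ω] [IsProbabilityMeasure (ℙ : Measure Ω)]

lemma cdf_nonneg {f : Ω → ℝ} {F : ℝ → ℝ}
    (hF : ∀ x, F x = (ℙ {ω | f ω ≤ x}).toReal) (x : ℝ) : 0 ≤ F x := by
  rw [hF]; exact ENNReal.toReal_nonneg

lemma cdf_le_one {f : Ω → ℝ} {F : ℝ → ℝ}
    (hF : ∀ x, F x = (ℙ {ω | f ω ≤ x}).toReal) (x : ℝ) : F x ≤ 1 := by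
  rw [hF]
  have := prob_le_one (μ := (ℙ : Measure Ω)) (s := {ω | f ω ≤ x})
  simpa using ENNReal.toReal_mono (by simp) this

lemma cdf_apply {f : Ω → ℝ} {F : ℝ → ℝ}
    (hF : ∀ x, F x = (ℙ {ω | f ω ≤ x}).toReal) (x : ℝ) :
    ℙ {ω | f ω ≤ x} = ENNReal.ofReal (F x) := by
  rw [hF, ENNReal.ofReal_toReal (measure_ne_top _ _)]

lemma atomless_of_cont_cdf {f : Ω → ℝ} (hf : Measurable f) {F : ℝ → ℝ} (hFc : Continuous F)
    (hF : ∀ x, F x = (ℙ {ω | f ω ≤ x}).toReal) (c : ℝ) :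
    ℙ {ω | f ω = c} = 0 := by
  have key : ∀ x ∈ Set.Iio c, (ℙ {ω | f ω = c}).toReal ≤ F c - F x := by
    intro x hx
    have hsub : {ω | f ω = c} ⊆ {ω | f ω ≤ c} \ {ω | f ω ≤ x} := by
      intro ω (hω : f ω = c)
      exact ⟨le_of_eq hω, by simp only [Set.mem_setOf_eq, hω]; exact not_le.mpr hx⟩
    have hmono : ℙ {ω | f ω ≤ x} ≤ ℙ {ω | f ω ≤ c} :=
      measure_mono (fun ω (h : f ω ≤ x) => h.trans (le_of_lt hx))
    calc (ℙ {ω | f ω = c}).toReal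
        ≤ (ℙ ({ω | f ω ≤ c} \ {ω | f ω ≤ x})).toReal := by
          apply ENNReal.toReal_mono (measure_ne_top _ _)
          exact measure_mono hsub
      _ = (ℙ {ω | f ω ≤ c} - ℙ {ω | f ω ≤ x}).toReal := by
          have hd := measure_diff (μ := ℙ) (s₁ := {ω | f ω ≤ c}) (s₂ := {ω | f ω ≤ x})
            (fun ω (h : f ω ≤ x) => h.trans (le_of_lt hx))
            (measurableSet_le hf measurable_const).nullMeasurableSet
            (measure_ne_top _ _)
          rw [hd]
      _ ≤ F c - F x := by
          rw [hF, hF, ENNReal.toReal_sub_of_le hmono (measure_ne_top _ _)]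
  have hlim : Filter.Tendsto (fun x => F c - F x) (nhdsWithin c (Set.Iio c)) (nhds 0) := by
    have := (hFc.tendsto c).mono_left (nhdsWithin_le_nhds (s := Set.Iio c))
    simpa using (tendsto_const_nhds (x := F c)).sub this
  have h0 : (ℙ {ω | f ω = c}).toReal ≤ 0 := by
    refine ge_of_tendsto hlim ?_
    filter_upwards [self_mem_nhdsWithin] with x hx using key x hx
  have : (ℙ {ω | f ω = c}).toReal = 0 := le_antisymm h0 ENNReal.toReal_nonneg
  exact (ENNReal.toReal_eq_zero_iff _).mp this |>.resolve_right (measure_ne_top _ _)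

lemma prob_lt_of_cont_cdf {f : Ω → ℝ} (hf : Measurable f) {F : ℝ → ℝ}
    (hF : ∀ x, F x = (ℙ {ω | f ω ≤ x}).toReal) (c : ℝ) :
    ℙ {ω | c < f ω} = ENNReal.ofReal (1 - F c) := by
  have hcompl : {ω | c < f ω} = {ω | f ω ≤ c}ᶜ := by
    ext ω; simp [not_le]
  rw [hcompl, prob_compl_eq_one_sub (measurableSet_le hf measurable_const), cdf_apply hF,
    ENNReal.ofReal_sub _ (cdf_nonneg hF c), ENNReal.ofReal_one]

lemma prob_le_cont_of_cont_cdf {f : Ω → ℝ} (hf : Measurable f) {F : ℝ → ℝ} (hFc : Continuous F)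
    (hF : ∀ x, F x = (ℙ {ω | f ω ≤ x}).toReal) (c : ℝ) :
    ℙ {ω | c ≤ f ω} = ENNReal.ofReal (1 - F c) := by
  have hsplit : {ω | c ≤ f ω} = {ω | c < f ω} ∪ {ω | f ω = c} := by
    ext ω
    simp only [Set.mem_setOf_eq, Set.mem_union]
    constructor
    · intro h; rcases lt_or_eq_of_le h with h | h
      · exact Or.inl h
      · exact Or.inr h.symm
    · rintro (h | h); exacts [le_of_lt h, le_of_eq h.symm]
  have h1 : ℙ {ω | c ≤ f ω} ≤ ENNReal.ofReal (1 - F c) := by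
    rw [hsplit, ← prob_lt_of_cont_cdf hf hF c]
    refine (measure_union_le _ _).trans ?_
    rw [atomless_of_cont_cdf hf hFc hF c, add_zero]
  have h2 : ENNReal.ofReal (1 - F c) ≤ ℙ {ω | c ≤ f ω} := by
    rw [← prob_lt_of_cont_cdf hf hF c]
    exact measure_mono (fun ω (h : c < f ω) => le_of_lt h)
  exact le_antisymm h1 h2

/-- composition along a measurable ℕ-valued index -/
lemma measurable_comp_nat {Ω γ : Type*} [MeasurableSpace Ω] [MeasurableSpace γ]
    {N : Ω → ℕ} (hN : Measurable N) {F : ℕ → Ω → γ} (hF : ∀ n, Measurable (F n)) :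
    Measurable (fun ω => F (N ω) ω) := by
  intro s hs
  have : (fun ω => F (N ω) ω) ⁻¹' s = ⋃ n, (N ⁻¹' {n}) ∩ (F n ⁻¹' s) := by
    ext ω
    simp only [Set.mem_preimage, Set.mem_iUnion, Set.mem_inter_iff, Set.mem_singleton_iff]
    constructor
    · intro h; exact ⟨N ω, rfl, h⟩
    · rintro ⟨n, rfl, h⟩; exact h
  rw [this]
  exact MeasurableSet.iUnion fun n => (hN (measurableSet_singleton n)).inter (hF n hs)

end Aux

/-- Theorem 6 (no announced list price): the seller's expected discounted payoff at time
`t` equals `e^{−∫_0^t r} ∫_0^∞ (1 − e^{−Λ(t) ψ(t,y)}) dy`, where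
`ψ(t,y) = (1 − F_ξ(max(R,y))) (1 − (1/Λ(t)) ∫_0^t λ(a) F_τ(t−a) da)`. -/
theorem expected_discounted_payoff_no_list_price
    {Ω : Type*} [MeasureSpace Ω] [IsProbabilityMeasure (ℙ : Measure Ω)]
    (t : ℝ) (ht : 0 < t)
    (l : ℝ → ℝ) (hl_int : IntegrableOn l (Set.Icc 0 t))
    (hl_nonneg : ∀ a ∈ Set.Icc (0:ℝ) t, 0 ≤ l a)
    (Lam : ℝ) (hLam : Lam = ∫ a in (0:ℝ)..t, l a) (hLam_pos : 0 < Lam)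
    (r : ℝ → ℝ) (hr_int : IntervalIntegrable r volume 0 t)
    (R : ℝ) (hR : 0 < R)
    (N : Ω → ℕ) (hNmeas : Measurable N)
    (hN : Measure.map N ℙ = poissonMeasure Lam.toNNReal)
    (A ξ τ : ℕ → Ω → ℝ)
    (hA : ∀ i, Measurable (A i)) (hξ : ∀ i, Measurable (ξ i)) (hτ : ∀ i, Measurable (τ i))
    (hξ_nonneg : ∀ i ω, 0 ≤ ξ i ω) (hξ_int : ∀ i, Integrable (ξ i) ℙ)
    (hτ_nonneg : ∀ i ω, 0 ≤ τ i ω)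
    (hAlaw : ∀ i, Measure.map (A i) ℙ
      = (volume.restrict (Set.Icc (0:ℝ) t)).withDensity
          (fun a => ENNReal.ofReal (l a / Lam)))
    (Fξ : ℝ → ℝ) (hFξ_cont : Continuous Fξ)
    (hFξ : ∀ i, ∀ x : ℝ, Fξ x = (ℙ {ω | ξ i ω ≤ x}).toReal)
    (Fτ : ℝ → ℝ) (hFτ_cont : Continuous Fτ)
    (hFτ : ∀ i, ∀ x : ℝ, Fτ x = (ℙ {ω | τ i ω ≤ x}).toReal)
    (hcomp_indep : ∀ i, iIndepFun ![A i, ξ i, τ i] ℙ)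
    (hiid : iIndepFun (fun i ω => (A i ω, ξ i ω, τ i ω)) ℙ)
    (hNindep : IndepFun N (fun ω => fun i => (A i ω, ξ i ω, τ i ω)) ℙ)
    (psi : ℝ → ℝ)
    (hpsi : ∀ y : ℝ, psi y = (1 - Fξ (max R y))
      * (1 - (1 / Lam) * ∫ a in (0:ℝ)..t, l a * Fτ (t - a))) :
    (∫ ω, Real.exp (-∫ s in (0:ℝ)..t, r s)
          * (Finset.Icc 1 (N ω)).fold max 0
              (fun i => ξ i ω * (if R ≤ ξ i ω then (1:ℝ) else 0)
                * (if t - A i ω ≤ τ i ω then (1:ℝ) else 0)) ∂ℙ)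
      = Real.exp (-∫ s in (0:ℝ)..t, r s)
          * ∫ y in Set.Ioi (0:ℝ), (1 - Real.exp (-(Lam * psi y))) := by
    classical
  set c0 : ℝ := Real.exp (-∫ s in (0:ℝ)..t, r s) with hc0
  set g : ℝ × ℝ × ℝ → ℝ := fun p => p.2.1 * (if R ≤ p.2.1 then (1:ℝ) else 0)
      * (if t - p.1 ≤ p.2.2 then (1:ℝ) else 0) with hgdef
  set Y : ℕ → Ω → ℝ := fun i ω => g (A i ω, ξ i ω, τ i ω) with hYdef
  set M : Ω → ℝ := fun ω => (Finset.Icc 1 (N ω)).fold max 0 (fun i => Y i ω) with hMdef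
  show (∫ ω, c0 * M ω ∂ℙ) = c0 * ∫ y in Set.Ioi (0:ℝ), (1 - Real.exp (-(Lam * psi y)))
  set K : ℝ := 1 - (1 / Lam) * ∫ a in (0:ℝ)..t, l a * Fτ (t - a) with hKdef
  have hLam_nn : (0:ℝ) ≤ Lam := hLam_pos.le
  have hLamNN : ((Lam.toNNReal : NNReal) : ℝ) = Lam := Real.coe_toNNReal _ hLam_nn
  -- measurability
  have hg_meas : Measurable g := by
    rw [hgdef]
    refine (((measurable_fst.comp measurable_snd).mul
      (Measurable.ite ?_ measurable_const measurable_const)).mul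
      (Measurable.ite ?_ measurable_const measurable_const))
    · exact measurableSet_le measurable_const (measurable_fst.comp measurable_snd)
    · exact measurableSet_le (measurable_const.sub measurable_fst)
        (measurable_snd.comp measurable_snd)
  have hY_meas : ∀ i, Measurable (Y i) := fun i =>
    hg_meas.comp ((hA i).prodMk ((hξ i).prodMk (hτ i)))
  have hY_nonneg : ∀ i ω, 0 ≤ Y i ω := by
    intro i ω
    simp only [hYdef, hgdef]
    exact mul_nonneg (mul_nonneg (hξ_nonneg i ω) (by split_ifs <;> norm_num))
      (by split_ifs <;> norm_num)
  have hY_eq : ∀ i ω, Y i ω = ξ i ω * (if R ≤ ξ i ω then (1:ℝ) else 0)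
      * (if t - A i ω ≤ τ i ω then (1:ℝ) else 0) := fun i ω => rfl
  -- cdf facts
  have hFξ0 : ∀ x, 0 ≤ Fξ x := cdf_nonneg (hFξ 0)
  have hFξ1 : ∀ x, Fξ x ≤ 1 := cdf_le_one (hFξ 0)
  have hFτ0 : ∀ x, 0 ≤ Fτ x := cdf_nonneg (hFτ 0)
  have hFτ1 : ∀ x, Fτ x ≤ 1 := cdf_le_one (hFτ 0)
  -- integrability on Icc
  have hFτt_cont : Continuous (fun a : ℝ => Fτ (t - a)) :=
    hFτ_cont.comp (continuous_const.sub continuous_id)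
  have hlFτ_int : IntegrableOn (fun a => l a * Fτ (t - a)) (Set.Icc 0 t) := by
    have h1 : IntegrableOn (fun a => Fτ (t - a) * l a) (Set.Icc 0 t) :=
      hl_int.bdd_mul hFτt_cont.aestronglyMeasurable
        (c := 1) (ae_of_all _ fun a => by
          rw [Real.norm_eq_abs, abs_le]
          exact ⟨by linarith [hFτ0 (t - a)], hFτ1 (t - a)⟩)
    exact h1.congr (ae_of_all _ fun a => mul_comm _ _)
  have hlK_int : IntegrableOn (fun a => (l a / Lam) * (1 - Fτ (t - a))) (Set.Icc 0 t) := by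
    have h1 : IntegrableOn (fun a => (1 - Fτ (t - a)) * (l a / Lam)) (Set.Icc 0 t) :=
      (hl_int.div_const Lam).bdd_mul
        (continuous_const.sub hFτt_cont).aestronglyMeasurable
        (c := 1) (ae_of_all _ fun a => by
          rw [Real.norm_eq_abs, abs_le]
          constructor <;> [linarith [hFτ1 (t - a)]; linarith [hFτ0 (t - a)]])
    exact h1.congr (ae_of_all _ fun a => mul_comm _ _)
  -- interval ↔ Icc
  have hLamIcc : ∫ a in Set.Icc (0:ℝ) t, l a = Lam := by
    rw [hLam, intervalIntegral.integral_of_le ht.le, integral_Icc_eq_integral_Ioc]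
  have hlFτIcc : ∫ a in Set.Icc (0:ℝ) t, l a * Fτ (t - a)
      = ∫ a in (0:ℝ)..t, l a * Fτ (t - a) := by
    rw [intervalIntegral.integral_of_le ht.le, integral_Icc_eq_integral_Ioc]
  have hKI : ∫ a in Set.Icc (0:ℝ) t, (l a / Lam) * (1 - Fτ (t - a)) = K := by
    have hsplit : ∀ a : ℝ, (l a / Lam) * (1 - Fτ (t - a))
        = (1/Lam) * l a - (1/Lam) * (l a * Fτ (t - a)) := fun a => by ring
    simp only [hsplit]
    rw [integral_sub (hl_int.const_mul _) (hlFτ_int.const_mul _),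
      integral_const_mul, integral_const_mul, hLamIcc, hlFτIcc, hKdef,
      one_div_mul_cancel hLam_pos.ne']
  have hK_nonneg : 0 ≤ K := by
    rw [← hKI]
    apply setIntegral_nonneg measurableSet_Icc
    intro a ha
    exact mul_nonneg (div_nonneg (hl_nonneg a ha) hLam_nn) (by linarith [hFτ1 (t - a)])
  -- H1 : probability that an offer is still available
  have hS : MeasurableSet {p : ℝ × ℝ | t - p.1 ≤ p.2} :=
    measurableSet_le (measurable_const.sub measurable_fst) measurable_snd
  have H1 : ∀ i, ℙ {ω | t - A i ω ≤ τ i ω} = ENNReal.ofReal K := by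
    intro i
    haveI : IsProbabilityMeasure (Measure.map (τ i) ℙ) :=
      Measure.isProbabilityMeasure_map (hτ i).aemeasurable
    have hAτ_indep : IndepFun (A i) (τ i) ℙ := by
      have h02 := (hcomp_indep i).indepFun (show (0 : Fin 3) ≠ 2 by decide)
      simpa using h02
    have hmapeq : Measure.map (fun ω => (A i ω, τ i ω)) ℙ
        = (Measure.map (A i) ℙ).prod (Measure.map (τ i) ℙ) :=
      (indepFun_iff_map_prod_eq_prod_map_map (hA i).aemeasurable (hτ i).aemeasurable).mp
        hAτ_indep
    have h1 : ℙ {ω | t - A i ω ≤ τ i ω}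
        = Measure.map (fun ω => (A i ω, τ i ω)) ℙ {p : ℝ × ℝ | t - p.1 ≤ p.2} :=
      (Measure.map_apply ((hA i).prodMk (hτ i)) hS).symm
    rw [h1, hmapeq, Measure.prod_apply hS]
    have h2 : ∀ a : ℝ, (Measure.map (τ i) ℙ) (Prod.mk a ⁻¹' {p : ℝ × ℝ | t - p.1 ≤ p.2})
        = ENNReal.ofReal (1 - Fτ (t - a)) := by
      intro a
      have hpre : Prod.mk a ⁻¹' {p : ℝ × ℝ | t - p.1 ≤ p.2} = Set.Ici (t - a) := rfl
      rw [hpre, Measure.map_apply (hτ i) measurableSet_Ici]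
      exact prob_le_cont_of_cont_cdf (hτ i) hFτ_cont (hFτ i) (t - a)
    simp only [h2]
    have hdens : AEMeasurable (fun a => ENNReal.ofReal (l a / Lam))
        (volume.restrict (Set.Icc (0:ℝ) t)) :=
      ENNReal.measurable_ofReal.comp_aemeasurable
        (hl_int.aestronglyMeasurable.aemeasurable.div_const Lam)
    rw [hAlaw i, lintegral_withDensity_eq_lintegral_mul_non_measurable₀ _
      hdens (ae_of_all _ fun a => ENNReal.ofReal_lt_top) _]
    have hcong : ∀ᵐ a ∂(volume.restrict (Set.Icc (0:ℝ) t)),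
        (fun a => ENNReal.ofReal (l a / Lam)) a * ENNReal.ofReal (1 - Fτ (t - a))
          = ENNReal.ofReal ((l a / Lam) * (1 - Fτ (t - a))) := by
      filter_upwards [ae_restrict_mem measurableSet_Icc] with a ha
      rw [ENNReal.ofReal_mul (div_nonneg (hl_nonneg a ha) hLam_nn)]
    calc ∫⁻ a, ((fun a => ENNReal.ofReal (l a / Lam)) * fun a => ENNReal.ofReal (1 - Fτ (t - a))) a
          ∂(volume.restrict (Set.Icc (0:ℝ) t))
        = ∫⁻ a, ENNReal.ofReal ((l a / Lam) * (1 - Fτ (t - a)))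
            ∂(volume.restrict (Set.Icc (0:ℝ) t)) := lintegral_congr_ae hcong
      _ = ENNReal.ofReal (∫ a in Set.Icc (0:ℝ) t, (l a / Lam) * (1 - Fτ (t - a))) := by
          rw [← ofReal_integral_eq_lintegral_ofReal hlK_int ?_]
          filter_upwards [ae_restrict_mem measurableSet_Icc] with a ha
          exact mul_nonneg (div_nonneg (hl_nonneg a ha) hLam_nn) (by linarith [hFτ1 (t - a)])
      _ = ENNReal.ofReal K := by rw [hKI]
  have hK_le_one : K ≤ 1 := by
    have := H1 0 ▸ prob_le_one (μ := (ℙ : Measure Ω)) (s := {ω | t - A 0 ω ≤ τ 0 ω})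
    exact_mod_cast ENNReal.ofReal_le_one.mp this
  -- psi facts
  have hpsi_nonneg : ∀ y, 0 ≤ psi y := by
    intro y
    rw [hpsi y]
    exact mul_nonneg (by linarith [hFξ1 (max R y)]) hK_nonneg
  have hpsi_le_one : ∀ y, psi y ≤ 1 := by
    intro y
    rw [hpsi y]
    calc (1 - Fξ (max R y)) * K ≤ 1 * 1 :=
      mul_le_mul (by linarith [hFξ0 (max R y)]) hK_le_one hK_nonneg one_pos.le
    _ = 1 := mul_one 1
  
  -- per-offer probabilities
  have hmeas3 : ∀ i, ∀ j : Fin 3, Measurable (![A i, ξ i, τ i] j) := by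
    intro i j
    fin_cases j
    · exact hA i
    · exact hξ i
    · exact hτ i
  have H3 : ∀ i, ∀ y : ℝ, 0 ≤ y → ℙ {ω | y < Y i ω} = ENNReal.ofReal (psi y) := by
    intro i y hy
    have hsub1 : ({ω | max R y < ξ i ω} ∩ {ω | t - A i ω ≤ τ i ω}) ⊆ {ω | y < Y i ω} := by
      rintro ω ⟨h1, h2⟩
      have h1' : max R y < ξ i ω := h1
      have h2' : t - A i ω ≤ τ i ω := h2
      have hR' : R ≤ ξ i ω := le_of_lt (lt_of_le_of_lt (le_max_left R y) h1')
      show y < Y i ω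
      rw [hY_eq, if_pos hR', if_pos h2', mul_one, mul_one]
      exact lt_of_le_of_lt (le_max_right R y) h1'
    have hsub2 : {ω | y < Y i ω}
        ⊆ ({ω | max R y < ξ i ω} ∩ {ω | t - A i ω ≤ τ i ω}) ∪ {ω | ξ i ω = R} := by
      intro ω (hω : y < Y i ω)
      rw [hY_eq] at hω
      by_cases h2 : t - A i ω ≤ τ i ω
      · by_cases h1 : R ≤ ξ i ω
        · rw [if_pos h1, if_pos h2, mul_one, mul_one] at hω
          rcases eq_or_lt_of_le h1 with he | hlt
          · exact Or.inr he.symm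
          · exact Or.inl ⟨max_lt hlt hω, h2⟩
        · rw [if_neg h1, mul_zero, zero_mul] at hω
          exact absurd hω (not_lt.2 hy)
      · rw [if_neg h2, mul_zero] at hω
        exact absurd hω (not_lt.2 hy)
    have heq : ℙ {ω | y < Y i ω}
        = ℙ ({ω | max R y < ξ i ω} ∩ {ω | t - A i ω ≤ τ i ω}) := by
      apply le_antisymm
      · calc ℙ {ω | y < Y i ω}
            ≤ ℙ (({ω | max R y < ξ i ω} ∩ {ω | t - A i ω ≤ τ i ω}) ∪ {ω | ξ i ω = R}) :=
              measure_mono hsub2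
          _ ≤ ℙ ({ω | max R y < ξ i ω} ∩ {ω | t - A i ω ≤ τ i ω}) + ℙ {ω | ξ i ω = R} :=
              measure_union_le _ _
          _ = ℙ ({ω | max R y < ξ i ω} ∩ {ω | t - A i ω ≤ τ i ω}) := by
              rw [atomless_of_cont_cdf (hξ i) hFξ_cont (hFξ i) R, add_zero]
      · exact measure_mono hsub1
    rw [heq]
    have hindep2 : IndepFun (fun ω => (A i ω, τ i ω)) (ξ i) ℙ := by
      have h021 := (hcomp_indep i).indepFun_prodMk (hmeas3 i) 0 2 1
        (by decide) (by decide)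
      simpa using h021
    have hinter : {ω | max R y < ξ i ω} ∩ {ω | t - A i ω ≤ τ i ω}
        = (fun ω => (A i ω, τ i ω)) ⁻¹' {p : ℝ × ℝ | t - p.1 ≤ p.2}
          ∩ (ξ i) ⁻¹' (Set.Ioi (max R y)) := by
      ext ω
      simp only [Set.mem_inter_iff, Set.mem_setOf_eq, Set.mem_preimage, Set.mem_Ioi]
      tauto
    rw [hinter, hindep2.measure_inter_preimage_eq_mul _ _ hS measurableSet_Ioi]
    have hA1 : ℙ ((fun ω => (A i ω, τ i ω)) ⁻¹' {p : ℝ × ℝ | t - p.1 ≤ p.2})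
        = ENNReal.ofReal K := H1 i
    have hA2 : ℙ ((ξ i) ⁻¹' (Set.Ioi (max R y))) = ENNReal.ofReal (1 - Fξ (max R y)) :=
      prob_lt_of_cont_cdf (hξ i) (hFξ i) (max R y)
    rw [hA1, hA2, hpsi y,
      ENNReal.ofReal_mul (show (0:ℝ) ≤ 1 - Fξ (max R y) by linarith [hFξ1 (max R y)]),
      mul_comm]
  have H4 : ∀ i, ∀ y : ℝ, 0 ≤ y → ℙ {ω | Y i ω ≤ y} = ENNReal.ofReal (1 - psi y) := by
    intro i y hy
    have hc : {ω | Y i ω ≤ y} = {ω | y < Y i ω}ᶜ := by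
      ext ω; simp [not_lt]
    rw [hc, prob_compl_eq_one_sub (measurableSet_lt measurable_const (hY_meas i)),
      H3 i y hy, ENNReal.ofReal_sub _ (hpsi_nonneg y), ENNReal.ofReal_one]
  
  -- independence of the Y's, fold measurability
  have hYindep : iIndepFun Y ℙ := by
    have := hiid.comp (fun _ => g) (fun _ => hg_meas)
    exact this
  have hfold_meas : ∀ s : Finset ℕ, Measurable (fun ω => s.fold max 0 (fun i => Y i ω)) := by
    intro s
    induction s using Finset.induction_on with
    | empty => simpa using measurable_const
    | @insert a s ha ih =>
        have : (fun ω => (insert a s).fold max 0 (fun i => Y i ω))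
            = fun ω => max (Y a ω) (s.fold max 0 (fun i => Y i ω)) := by
          funext ω; rw [Finset.fold_insert ha]
        rw [this]
        exact (hY_meas a).max ih
  have hM_meas : Measurable M := by
    rw [hMdef]
    exact measurable_comp_nat hNmeas (fun n => hfold_meas (Finset.Icc 1 n))
  have hM_nonneg : ∀ ω, 0 ≤ M ω := by
    intro ω
    simp only [hMdef]
    rw [Finset.le_fold_max]
    exact Or.inl le_rfl
  have hq_nonneg : ∀ y : ℝ, 0 ≤ 1 - psi y := fun y => by linarith [hpsi_le_one y]
  -- H5 : distribution of the maximum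
  have H5 : ∀ y : ℝ, 0 ≤ y →
      ℙ {ω | M ω ≤ y} = ENNReal.ofReal (Real.exp (-(Lam * psi y))) := by
    intro y hy
    have hEni_meas : ∀ n : ℕ, MeasurableSet (⋂ i ∈ Finset.Icc 1 n, {ω | Y i ω ≤ y}) :=
      fun n => MeasurableSet.biInter (Finset.Icc 1 n).countable_toSet
        (fun i _ => measurableSet_le (hY_meas i) measurable_const)
    have hdec : {ω | M ω ≤ y}
        = ⋃ n, (N ⁻¹' {n} ∩ ⋂ i ∈ Finset.Icc 1 n, {ω | Y i ω ≤ y}) := by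
      ext ω
      simp only [Set.mem_setOf_eq, hMdef, Finset.fold_max_le, Set.mem_iUnion,
        Set.mem_inter_iff, Set.mem_preimage, Set.mem_singleton_iff, Set.mem_iInter]
      constructor
      · rintro ⟨-, h⟩
        exact ⟨N ω, rfl, fun i hi => h i hi⟩
      · rintro ⟨n, rfl, h⟩
        exact ⟨hy, h⟩
    have hdisj : Pairwise (Function.onFun Disjoint
        (fun n => N ⁻¹' {n} ∩ ⋂ i ∈ Finset.Icc 1 n, {ω | Y i ω ≤ y})) := by
      intro m n hmn
      refine Set.disjoint_left.mpr ?_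
      rintro ω ⟨hm, -⟩ ⟨hn, -⟩
      exact hmn (hm.symm.trans hn)
    have hmeasn : ∀ n : ℕ, MeasurableSet
        (N ⁻¹' {n} ∩ ⋂ i ∈ Finset.Icc 1 n, {ω | Y i ω ≤ y}) :=
      fun n => (hNmeas (measurableSet_singleton n)).inter (hEni_meas n)
    have hterm : ∀ n : ℕ, ℙ (N ⁻¹' {n} ∩ ⋂ i ∈ Finset.Icc 1 n, {ω | Y i ω ≤ y})
        = ENNReal.ofReal (poissonPMFReal Lam.toNNReal n * (1 - psi y) ^ n) := by
      intro n
      have hB : MeasurableSet {f : ℕ → ℝ × ℝ × ℝ | ∀ i ∈ Finset.Icc 1 n, g (f i) ≤ y} := by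
        have hBi : {f : ℕ → ℝ × ℝ × ℝ | ∀ i ∈ Finset.Icc 1 n, g (f i) ≤ y}
            = ⋂ i ∈ Finset.Icc 1 n, (fun f : ℕ → ℝ × ℝ × ℝ => g (f i)) ⁻¹' Set.Iic y := by
          ext f; simp
        rw [hBi]
        exact MeasurableSet.biInter (Finset.Icc 1 n).countable_toSet
          (fun i _ => (hg_meas.comp (measurable_pi_apply i)) measurableSet_Iic)
      have hpre : (⋂ i ∈ Finset.Icc 1 n, {ω | Y i ω ≤ y})
          = (fun ω => fun i => (A i ω, ξ i ω, τ i ω)) ⁻¹'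
            {f : ℕ → ℝ × ℝ × ℝ | ∀ i ∈ Finset.Icc 1 n, g (f i) ≤ y} := by
        ext ω
        simp only [Set.mem_iInter, Set.mem_setOf_eq, Set.mem_preimage, hYdef]
      rw [hpre, hNindep.measure_inter_preimage_eq_mul _ _ (measurableSet_singleton n) hB,
        ← hpre]
      have hNn : ℙ (N ⁻¹' {n}) = ENNReal.ofReal (poissonPMFReal Lam.toNNReal n) := by
        rw [← Measure.map_apply hNmeas (measurableSet_singleton n), hN,
          poissonMeasure_singleton]
        rfl
      have hprod : ℙ (⋂ i ∈ Finset.Icc 1 n, {ω | Y i ω ≤ y})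
          = ∏ i ∈ Finset.Icc 1 n, ℙ {ω | Y i ω ≤ y} :=
        hYindep.meas_biInter (fun i _ => ⟨Set.Iic y, measurableSet_Iic, rfl⟩)
      rw [hNn, hprod]
      have : ∀ i ∈ Finset.Icc 1 n, ℙ {ω | Y i ω ≤ y} = ENNReal.ofReal (1 - psi y) :=
        fun i _ => H4 i y hy
      rw [Finset.prod_congr rfl this, Finset.prod_const, Nat.card_Icc, Nat.add_sub_cancel,
        ← ENNReal.ofReal_pow (hq_nonneg y),
        ← ENNReal.ofReal_mul poissonPMFReal_nonneg]
    have hsum : HasSum (fun n : ℕ => poissonPMFReal Lam.toNNReal n * (1 - psi y) ^ n)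
        (Real.exp (-(Lam * psi y))) := by
      have h1 : (fun n : ℕ => poissonPMFReal Lam.toNNReal n * (1 - psi y) ^ n)
          = fun n : ℕ => Real.exp (-Lam) * ((Lam * (1 - psi y)) ^ n / n.factorial) := by
        funext n
        simp only [poissonPMFReal, hLamNN, mul_pow]
        ring
      have h2 : Real.exp (-(Lam * psi y)) = Real.exp (-Lam) * Real.exp (Lam * (1 - psi y)) := by
        rw [← Real.exp_add]; ring_nf
      rw [h1, h2, Real.exp_eq_exp_ℝ]
      exact (NormedSpace.expSeries_div_hasSum_exp (Lam * (1 - psi y))).mul_left _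
    calc ℙ {ω | M ω ≤ y}
        = ∑' n : ℕ, ℙ (N ⁻¹' {n} ∩ ⋂ i ∈ Finset.Icc 1 n, {ω | Y i ω ≤ y}) := by
          rw [hdec, measure_iUnion hdisj hmeasn]
      _ = ∑' n : ℕ, ENNReal.ofReal (poissonPMFReal Lam.toNNReal n * (1 - psi y) ^ n) :=
          tsum_congr hterm
      _ = ENNReal.ofReal (Real.exp (-(Lam * psi y))) := by
          rw [← hsum.tsum_eq]
          exact (ENNReal.ofReal_tsum_of_nonneg
            (fun n => mul_nonneg poissonPMFReal_nonneg (pow_nonneg (hq_nonneg y) n))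
            hsum.summable).symm
  -- H6 : upper tail of M
  have H6 : ∀ y : ℝ, 0 < y →
      ℙ {ω | y < M ω} = ENNReal.ofReal (1 - Real.exp (-(Lam * psi y))) := by
    intro y hy
    have hc : {ω | y < M ω} = {ω | M ω ≤ y}ᶜ := by
      ext ω; simp [not_le]
    rw [hc, prob_compl_eq_one_sub (measurableSet_le hM_meas measurable_const), H5 y hy.le,
      ENNReal.ofReal_sub _ (Real.exp_nonneg _), ENNReal.ofReal_one]
  -- final assembly
  have hexp_le_one : ∀ y : ℝ, Real.exp (-(Lam * psi y)) ≤ 1 := fun y =>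
    Real.exp_le_one_iff.mpr (neg_nonpos.2 (mul_nonneg hLam_nn (hpsi_nonneg y)))
  have hpsi_cont : Continuous psi := by
    have : psi = fun y => (1 - Fξ (max R y)) * K := funext hpsi
    rw [this]
    exact (continuous_const.sub (hFξ_cont.comp (continuous_const.max continuous_id))).mul
      continuous_const
  have hcont : Continuous (fun y => 1 - Real.exp (-(Lam * psi y))) :=
    continuous_const.sub ((continuous_const.mul hpsi_cont).neg.rexp)
  have lhs1 : (∫ ω, c0 * M ω ∂ℙ) = c0 * ∫ ω, M ω ∂ℙ := integral_const_mul c0 M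
  have lhs2 : ∫ ω, M ω ∂ℙ = (∫⁻ ω, ENNReal.ofReal (M ω) ∂ℙ).toReal :=
    integral_eq_lintegral_of_nonneg_ae (ae_of_all _ hM_nonneg) hM_meas.aestronglyMeasurable
  have lk : ∫⁻ ω, ENNReal.ofReal (M ω) ∂ℙ = ∫⁻ y in Set.Ioi (0:ℝ), ℙ {ω | y < M ω} :=
    lintegral_eq_lintegral_meas_lt ℙ (ae_of_all _ hM_nonneg) hM_meas.aemeasurable
  have lcong : ∫⁻ y in Set.Ioi (0:ℝ), ℙ {ω | y < M ω}
      = ∫⁻ y in Set.Ioi (0:ℝ), ENNReal.ofReal (1 - Real.exp (-(Lam * psi y))) := by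
    apply setLIntegral_congr_fun measurableSet_Ioi
    exact (fun y hy => H6 y hy)
  have rhs2 : ∫ y in Set.Ioi (0:ℝ), (1 - Real.exp (-(Lam * psi y)))
      = (∫⁻ y in Set.Ioi (0:ℝ), ENNReal.ofReal (1 - Real.exp (-(Lam * psi y)))).toReal := by
    apply integral_eq_lintegral_of_nonneg_ae
    · refine ae_of_all _ (fun y => ?_)
      show (0:ℝ) ≤ 1 - Real.exp (-(Lam * psi y))
      linarith [hexp_le_one y]
    · exact hcont.aestronglyMeasurable
  rw [lhs1, lhs2, lk, lcong, rhs2]
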